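/- Let G = ⟨x, y | x⁸ = e, y² = x⁴, y⁻¹xy = x⁻¹⟩ be the generalized quaternion group of order 16 and H = ⟨x²⟩. Then H is a (2,2)-regular set in Cay(G,S) with S = {x², x⁻², x, x⁻¹, y, y⁻¹, xy, (xy)⁻¹}, but H is not a total perfect code in any Cayley graph of G. -/

import Mathlib

/-- The Cayley graph of a group `G` with connection set `S`:
`x` is adjacent to `y` iff `y * x⁻¹ ∈ S` (symmetrized; for inverse-closed `S`
not containing `1` this is the usual Cayley graph). -/
def cayley {G : Type*} [Group G] (S : Set G) : SimpleGraph G :=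
  SimpleGraph.fromRel (fun x y => y * x⁻¹ ∈ S)

/-- `C` is an `(a,b)`-regular set in `Γ`: every vertex in `C` has exactly `a`
neighbors in `C`, and every vertex outside `C` has exactly `b` neighbors in `C`. -/
def IsRegularSet {V : Type*} (Γ : SimpleGraph V) (C : Set V) (a b : ℕ) : Prop :=
  (∀ v ∈ C, (Γ.neighborSet v ∩ C).ncard = a) ∧
  (∀ v ∉ C, (Γ.neighborSet v ∩ C).ncard = b)

open QuaternionGroup

private abbrev Q16 := QuaternionGroup 4

private def Hfin : Finset Q16 := {a 0, a 2, a 4, a 6}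

private lemma a2_zpow (k : ℤ) : (a 2 : Q16) ^ k = a ((2 * k : ℤ) : ZMod 8) := by
  induction k using Int.induction_on with
  | zero => simp [QuaternionGroup.one_def, -a_zero]
  | succ n ih => rw [zpow_add_one, ih, a_mul_a]; push_cast; ring_nf
  | pred n ih =>
    rw [zpow_sub_one, ih, show (a 2 : Q16)⁻¹ = a (-2) by decide, a_mul_a]
    push_cast; ring_nf

private lemma Cchar :
    (Subgroup.zpowers ((a 1 : Q16) ^ 2) : Set Q16) = ↑Hfin := by
  ext w
  simp only [SetLike.mem_coe, Subgroup.mem_zpowers_iff, Finset.mem_coe]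
  constructor
  · rintro ⟨k, rfl⟩
    rw [show ((a 1 : Q16) ^ 2) = a 2 by decide, a2_zpow]
    have : ((2 * k : ℤ) : ZMod 8) = 2 * (k : ZMod 8) := by push_cast; ring
    rw [this]
    generalize (k : ZMod 8) = c
    revert c; decide
  · intro hw
    fin_cases hw
    · exact ⟨0, by decide⟩
    · exact ⟨1, by decide⟩
    · exact ⟨2, by decide⟩
    · exact ⟨3, by decide⟩

private def Sfin : Finset Q16 :=
  {a 1 ^ 2, (a 1 ^ 2)⁻¹, a 1, (a 1)⁻¹, xa 0, (xa 0)⁻¹,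
    a 1 * xa 0, (a 1 * xa 0)⁻¹}

private lemma Schar :
    ({a 1 ^ 2, (a 1 ^ 2)⁻¹, a 1, (a 1)⁻¹, xa 0, (xa 0)⁻¹,
        a 1 * xa 0, (a 1 * xa 0)⁻¹} : Set Q16) = ↑Sfin := by
  ext w
  simp [Sfin]

private instance cayleyFinsetAdjDec (F : Finset Q16) :
    DecidableRel (cayley (↑F : Set Q16)).Adj := fun v w =>
  decidable_of_iff (v ≠ w ∧ (w * v⁻¹ ∈ F ∨ v * w⁻¹ ∈ F)) (by
    rw [cayley, SimpleGraph.fromRel_adj]; simp)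

private lemma ncard_eq_filter (F : Finset Q16) (v : Q16) :
    ((cayley (↑F : Set Q16)).neighborSet v ∩ ↑Hfin).ncard
      = (Hfin.filter (fun w => (cayley (↑F : Set Q16)).Adj v w)).card := by
  rw [← Set.ncard_coe_finset]
  congr 1
  ext w
  simp [SimpleGraph.mem_neighborSet, and_comm]

private lemma key_fact : ∀ w ∈ Hfin,
    (a 4 : Q16) * w * (xa 0)⁻¹ = (w * (xa 0)⁻¹)⁻¹ ∧ (a 4 : Q16) * w ∈ Hfin := by
  decide

theorem stmt17 :
    IsRegularSet
      (cayley ({a 1 ^ 2, (a 1 ^ 2)⁻¹, a 1, (a 1)⁻¹, xa 0, (xa 0)⁻¹,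
          a 1 * xa 0, (a 1 * xa 0)⁻¹} : Set (QuaternionGroup 4)))
      (Subgroup.zpowers ((a 1 : QuaternionGroup 4) ^ 2) : Set (QuaternionGroup 4)) 2 2 ∧
    ¬ ∃ S : Set (QuaternionGroup 4), S⁻¹ = S ∧ (1 : QuaternionGroup 4) ∉ S ∧
      IsRegularSet (cayley S)
        (Subgroup.zpowers ((a 1 : QuaternionGroup 4) ^ 2) : Set (QuaternionGroup 4)) 1 1 := by
  constructor
  · rw [Schar, Cchar]
    constructor
    · intro v hv
      rw [ncard_eq_filter]
      rw [Finset.mem_coe] at hv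
      revert hv; revert v; decide
    · intro v hv
      rw [ncard_eq_filter]
      rw [Finset.mem_coe] at hv
      revert hv; revert v; decide
  · rintro ⟨S, hSinv, hone, ⟨_, hout⟩⟩
    have hmemiff : ∀ g : Q16, g ∈ S ↔ g⁻¹ ∈ S := by
      intro g
      constructor
      · intro h; rw [← hSinv, Set.mem_inv, inv_inv]; exact h
      · intro h; rw [← hSinv, Set.mem_inv]; exact h
    have hvC : (xa 0 : Q16) ∉ (Subgroup.zpowers ((a 1 : Q16) ^ 2) : Set Q16) := by
      rw [Cchar]; decide
    have h1 := hout (xa 0) hvC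
    rw [Set.ncard_eq_one] at h1
    obtain ⟨w, hw⟩ := h1
    have hwmem : w ∈ (cayley S).neighborSet (xa 0) ∩
        (Subgroup.zpowers ((a 1 : Q16) ^ 2) : Set Q16) := by
      rw [hw]; rfl
    obtain ⟨hadj, hwC⟩ := hwmem
    rw [SimpleGraph.mem_neighborSet, cayley, SimpleGraph.fromRel_adj] at hadj
    obtain ⟨hne, hor⟩ := hadj
    have ht : w * (xa 0)⁻¹ ∈ S := by
      rcases hor with h | h
      · exact h
      · rw [show w * (xa 0 : Q16)⁻¹ = ((xa 0) * w⁻¹)⁻¹ by group]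
        exact (hmemiff _).mp h
    have hwH : w ∈ Hfin := by
      have := hwC; rw [Cchar, Finset.mem_coe] at this; exact this
    -- w' = a 4 * w is another neighbor in C
    have hkey : (a 4 : Q16) * w * (xa 0)⁻¹ = (w * (xa 0)⁻¹)⁻¹ := key_fact w hwH |>.1
    have hw'C : (a 4 : Q16) * w ∈ (Subgroup.zpowers ((a 1 : Q16) ^ 2) : Set Q16) := by
      rw [Cchar, Finset.mem_coe]
      exact key_fact w hwH |>.2
    have hw'S : (a 4 : Q16) * w * (xa 0)⁻¹ ∈ S := by
      rw [hkey]; exact (hmemiff _).mp ht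
    have hne' : (xa 0 : Q16) ≠ a 4 * w := by
      intro h
      apply hone
      have : (a 4 : Q16) * w * (xa 0)⁻¹ = 1 := by rw [← h]; group
      rwa [this] at hw'S
    have hw'mem : (a 4 : Q16) * w ∈ (cayley S).neighborSet (xa 0) ∩
        (Subgroup.zpowers ((a 1 : Q16) ^ 2) : Set Q16) := by
      refine ⟨?_, hw'C⟩
      rw [SimpleGraph.mem_neighborSet, cayley, SimpleGraph.fromRel_adj]
      exact ⟨hne', Or.inl hw'S⟩
    rw [hw, Set.mem_singleton_iff] at hw'mem
    have h41 : (a 4 : Q16) = 1 :=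
      mul_right_cancel (b := w) (by rw [one_mul]; exact hw'mem)
    exact absurd h41 (by decide)
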